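/- Let (X,d) be a compact connected metric space and F = {f₁,…,f_k} a finite family of continuous surjective self-maps of X, with iterates ω_n as below and f = f_k∘f_{k-1}∘⋯∘f₁. Then the non-autonomous system (X,F) is minimal (every point x∈X has dense orbit {ω_n(x) : n∈ℕ}) if and only if the autonomous system (X,f) is minimal (every point x∈X has dense orbit {fⁿ(x) : n∈ℕ}). -/

import Mathlib

open Filter Metric Set Function

/-- The `n`-th iterate `ω_n` of the non-autonomous system generated by the finite family
`f 0, f 1, …, f k` applied cyclically: `ω_0 = id` and `ω_{n+1} = f (n % (k+1)) ∘ ω_n`,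
so that `ω_n = f_{((n-1) mod (k+1)) + 1} ∘ ⋯ ∘ f_2 ∘ f_1` in the paper's (1-based) notation.
The induced autonomous map `f = f_k ∘ ⋯ ∘ f_1` is `omegaIt f (k+1)`. -/
def omegaIt {X : Type*} {k : ℕ} (f : Fin (k + 1) → X → X) : ℕ → X → X
  | 0 => id
  | n + 1 => fun x => f ⟨n % (k + 1), Nat.mod_lt _ (Nat.succ_pos k)⟩ (omegaIt f n x)

/-- The "continuation word" of the cyclic system: `segIt f t n` applies the `n` maps
`f (t % (k+1)), f ((t+1) % (k+1)), …, f ((t+n-1) % (k+1))` in this order, i.e. it continues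
the non-autonomous iteration from time `t` for `n` more steps. -/
def segIt {X : Type*} {k : ℕ} (f : Fin (k + 1) → X → X) (t : ℕ) : ℕ → X → X
  | 0 => id
  | n + 1 => fun x => f ⟨(t + n) % (k + 1), Nat.mod_lt _ (Nat.succ_pos k)⟩ (segIt f t n x)

/-- A minimal set of the map `g`: a nonempty closed invariant set with no proper
nonempty closed invariant subset. -/
def IsMinSet {X : Type*} [TopologicalSpace X] (g : X → X) (Q : Set X) : Prop :=
  Q.Nonempty ∧ IsClosed Q ∧ g '' Q ⊆ Q ∧
    ∀ B, B ⊆ Q → B.Nonempty → IsClosed B → g '' B ⊆ B → B = Q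

section Aux

variable {X : Type*} {k : ℕ} (f : Fin (k + 1) → X → X)

lemma segIt_omegaIt (t : ℕ) : ∀ (n : ℕ) (x : X),
    segIt f t n (omegaIt f t x) = omegaIt f (t + n) x := by
  intro n
  induction n with
  | zero => intro x; rfl
  | succ n ih =>
      intro x
      show f ⟨(t + n) % (k + 1), _⟩ (segIt f t n (omegaIt f t x)) = omegaIt f (t + n + 1) x
      rw [ih]
      rfl

lemma omegaIt_continuous [TopologicalSpace X] (hc : ∀ i, Continuous (f i)) :
    ∀ n, Continuous (omegaIt f n)
  | 0 => continuous_id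
  | n + 1 => (hc _).comp (omegaIt_continuous hc n)

lemma omegaIt_surjective (hs : ∀ i, Function.Surjective (f i)) :
    ∀ n, Function.Surjective (omegaIt f n)
  | 0 => surjective_id
  | n + 1 => (hs _).comp (omegaIt_surjective hs n)

lemma omegaIt_mul_add (m t : ℕ) (x : X) :
    omegaIt f ((k + 1) * m + t) x = omegaIt f t (omegaIt f ((k + 1) * m) x) := by
  induction t with
  | zero => rfl
  | succ t ih =>
      show f ⟨((k + 1) * m + t) % (k + 1), _⟩ (omegaIt f ((k + 1) * m + t) x)
          = f ⟨t % (k + 1), _⟩ (omegaIt f t (omegaIt f ((k + 1) * m) x))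
      rw [ih]
      congr 1
      exact Fin.ext (by simp [Nat.mul_add_mod])

lemma omegaIt_mul (m : ℕ) (x : X) :
    omegaIt f ((k + 1) * m) x = (omegaIt f (k + 1))^[m] x := by
  induction m with
  | zero => rfl
  | succ m ih =>
      rw [Nat.mul_succ, omegaIt_mul_add, ih]
      exact (Function.iterate_succ_apply' _ _ _).symm

lemma omegaIt_decomp (n : ℕ) (x : X) :
    omegaIt f n x = omegaIt f (n % (k + 1)) ((omegaIt f (k + 1))^[n / (k + 1)] x) := by
  conv_lhs => rw [← Nat.div_add_mod n (k + 1)]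
  rw [omegaIt_mul_add, omegaIt_mul]

lemma iterate_mem_of_inv {g : X → X} {Q : Set X} (hQ : g '' Q ⊆ Q) {q : X} (hq : q ∈ Q) :
    ∀ m : ℕ, g^[m] q ∈ Q
  | 0 => hq
  | m + 1 => by
      rw [Function.iterate_succ_apply']
      exact hQ ⟨_, iterate_mem_of_inv hQ hq m, rfl⟩

/-- Every nonempty closed invariant subset of a compact metric space contains a minimal set. -/
lemma exists_minset [MetricSpace X] [CompactSpace X] {g : X → X}
    {A : Set X} (hne : A.Nonempty) (hcl : IsClosed A) (hinv : g '' A ⊆ A) :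
    ∃ Q, Q ⊆ A ∧ IsMinSet g Q := by
  let S : Set (Set X) := {B | B ⊆ A ∧ B.Nonempty ∧ IsClosed B ∧ g '' B ⊆ B}
  have hA : A ∈ S := ⟨Subset.rfl, hne, hcl, hinv⟩
  have H : ∀ c ⊆ S, IsChain (· ⊆ ·) c → c.Nonempty → ∃ lb ∈ S, ∀ s ∈ c, lb ⊆ s := by
    intro c hcS hchain hcne
    have hSd : DirectedOn (· ⊇ ·) c := by
      intro a ha b hb
      rcases hchain.total ha hb with h | h
      · exact ⟨a, ha, le_refl _, h⟩
      · exact ⟨b, hb, h, le_refl _⟩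
    have : Nonempty c := hcne.to_subtype
    have hcinter : (⋂₀ c).Nonempty :=
      IsCompact.nonempty_sInter_of_directed_nonempty_isCompact_isClosed hSd
        (fun U hU => (hcS hU).2.1) (fun U hU => (hcS hU).2.2.1.isCompact)
        (fun U hU => (hcS hU).2.2.1)
    refine ⟨⋂₀ c, ⟨?_, hcinter, isClosed_sInter fun U hU => (hcS hU).2.2.1, ?_⟩,
      fun s hsmem => sInter_subset_of_mem hsmem⟩
    · obtain ⟨s, hsmem⟩ := hcne
      exact (sInter_subset_of_mem hsmem).trans (hcS hsmem).1
    · rintro _ ⟨z, hz, rfl⟩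
      intro U hU
      exact (hcS hU).2.2.2 ⟨z, hz U hU, rfl⟩
  obtain ⟨m, hmA, hmin⟩ := zorn_superset_nonempty S H A hA
  refine ⟨m, hmin.1.1, hmin.1.2.1, hmin.1.2.2.1, hmin.1.2.2.2, ?_⟩
  intro B hBm hBne hBcl hBinv
  have hBS : B ∈ S := ⟨hBm.trans hmin.1.1, hBne, hBcl, hBinv⟩
  exact le_antisymm hBm (hmin.2 hBS hBm)

/-- Two minimal sets that intersect are equal. -/
lemma minset_eq_of_inter [TopologicalSpace X] {g : X → X} {Q Q' : Set X}
    (h : IsMinSet g Q) (h' : IsMinSet g Q') (hne : (Q ∩ Q').Nonempty) : Q = Q' := by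
  have hinv : g '' (Q ∩ Q') ⊆ Q ∩ Q' := by
    rintro _ ⟨z, ⟨hz1, hz2⟩, rfl⟩
    exact ⟨h.2.2.1 ⟨z, hz1, rfl⟩, h'.2.2.1 ⟨z, hz2, rfl⟩⟩
  have e1 : Q ∩ Q' = Q :=
    h.2.2.2 _ inter_subset_left hne (h.2.1.inter h'.2.1) hinv
  have e2 : Q ∩ Q' = Q' :=
    h'.2.2.2 _ inter_subset_right hne (h.2.1.inter h'.2.1) hinv
  rw [← e1, e2]

end Aux

/-- for connected `X`, the non-autonomous system `(X, F)` is minimal iff the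
autonomous system `(X, f)`, `f = f_k ∘ ⋯ ∘ f_1`, is minimal. -/
theorem minimal_nonautonomous_iff_autonomous
    {X : Type*} [MetricSpace X] [CompactSpace X] [ConnectedSpace X]
    {k : ℕ} (f : Fin (k + 1) → X → X)
    (hc : ∀ i, Continuous (f i)) (hs : ∀ i, Function.Surjective (f i)) :
    (∀ x : X, Dense (Set.range fun n : ℕ => omegaIt f n x)) ↔
    (∀ x : X, Dense (Set.range fun n : ℕ => (omegaIt f (k + 1))^[n] x)) := by
  classical
  set g : X → X := omegaIt f (k + 1) with hgdef
  have hgc : Continuous g := omegaIt_continuous f hc (k + 1)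
  constructor
  · -- hard direction
    intro h1
    -- orbit closures
    set A : X → Set X := fun x => closure (Set.range fun m : ℕ => g^[m] x) with hAdef
    have hAne : ∀ x, (A x).Nonempty := fun x => ⟨x, subset_closure ⟨0, rfl⟩⟩
    have hAcl : ∀ x, IsClosed (A x) := fun x => isClosed_closure
    have hAinv : ∀ x, g '' A x ⊆ A x := by
      intro x
      refine (image_closure_subset_closure_image hgc).trans (closure_mono ?_)
      rintro _ ⟨_, ⟨m, rfl⟩, rfl⟩
      exact ⟨m + 1, by simp [Function.iterate_succ_apply']⟩
    -- the (k+1) "tracks" of an invariant set cover X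
    have hcover : ∀ B : Set X, B.Nonempty → IsClosed B → g '' B ⊆ B →
        (⋃ t : Fin (k + 1), omegaIt f t '' B) = univ := by
      rintro B ⟨w, hw⟩ hBcl hBinv
      apply eq_univ_of_univ_subset
      intro y _
      have hclosed : IsClosed (⋃ t : Fin (k + 1), omegaIt f (t : ℕ) '' B) :=
        isClosed_iUnion_of_finite fun t =>
          (hBcl.isCompact.image (omegaIt_continuous f hc (t : ℕ))).isClosed
      have hrange : (Set.range fun n : ℕ => omegaIt f n w)
          ⊆ ⋃ t : Fin (k + 1), omegaIt f (t : ℕ) '' B := by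
        rintro _ ⟨n, rfl⟩
        refine mem_iUnion.2 ⟨⟨n % (k + 1), Nat.mod_lt _ (Nat.succ_pos k)⟩, ?_⟩
        exact ⟨g^[n / (k + 1)] w, iterate_mem_of_inv hBinv hw _, (omegaIt_decomp f n w).symm⟩
      have hy : y ∈ closure (Set.range fun n : ℕ => omegaIt f n w) := by
        rw [(h1 w).closure_eq]; trivial
      exact hclosed.closure_subset_iff.2 hrange hy
    -- some track of each minimal set has nonempty interior
    have hslot : ∀ Q : Set X, IsMinSet g Q →
        ∃ t : Fin (k + 1), (interior (omegaIt f (t : ℕ) '' Q)).Nonempty := by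
      intro Q hQ
      exact nonempty_interior_of_iUnion_of_closed
        (fun t : Fin (k + 1) =>
          (hQ.2.1.isCompact.image (omegaIt_continuous f hc (t : ℕ))).isClosed)
        (hcover Q hQ.1 hQ.2.1 hQ.2.2.1)
    -- the absorption open cover
    let 𝒬 := {Q : Set X // IsMinSet g Q}
    let τ : 𝒬 → Fin (k + 1) := fun Q => Classical.choose (hslot Q.1 Q.2)
    let V : 𝒬 → Set X := fun Q => interior (omegaIt f ((τ Q : ℕ)) '' Q.1)
    have hVne : ∀ Q, (V Q).Nonempty := fun Q => Classical.choose_spec (hslot Q.1 Q.2)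
    have hVopen : ∀ Q, IsOpen (V Q) := fun _ => isOpen_interior
    have hVsub : ∀ Q, V Q ⊆ omegaIt f ((τ Q : ℕ)) '' Q.1 := fun _ => interior_subset
    let u : 𝒬 × ℕ → Set X :=
      fun p => (fun x => omegaIt f ((τ p.1 : ℕ)) (g^[p.2] x)) ⁻¹' V p.1
    have hu_open : ∀ p, IsOpen (u p) := fun p =>
      (hVopen p.1).preimage ((omegaIt_continuous f hc _).comp (hgc.iterate p.2))
    have hu_cover : (univ : Set X) ⊆ ⋃ p : 𝒬 × ℕ, u p := by
      intro x _
      obtain ⟨Q, hQA, hQmin⟩ := exists_minset (hAne x) (hAcl x) (hAinv x)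
      set Qq : 𝒬 := ⟨Q, hQmin⟩ with hQq
      obtain ⟨v, hv⟩ := hVne Qq
      have h2 : v ∈ closure (Set.range fun m : ℕ => omegaIt f ((τ Qq : ℕ)) (g^[m] x)) := by
        have hsub1 : V Qq ⊆ omegaIt f ((τ Qq : ℕ)) '' A x :=
          (hVsub Qq).trans (image_mono hQA)
        have hsub2 : omegaIt f ((τ Qq : ℕ)) '' A x
            ⊆ closure (Set.range fun m : ℕ => omegaIt f ((τ Qq : ℕ)) (g^[m] x)) := by
          refine (image_closure_subset_closure_image
            (omegaIt_continuous f hc _)).trans (closure_mono ?_)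
          rintro _ ⟨_, ⟨m, rfl⟩, rfl⟩
          exact ⟨m, rfl⟩
        exact hsub2 (hsub1 hv)
      rcases mem_closure_iff.1 h2 (V Qq) (hVopen Qq) hv with ⟨_, hyV, ⟨m, rfl⟩⟩
      exact mem_iUnion.2 ⟨(Qq, m), hyV⟩
    -- entering the good track at the right phase absorbs the orbit into Q
    have hwrap : ∀ (Q : 𝒬) (m : ℕ) (x : X), x ∈ u (Q, m) → g^[m + 1] x ∈ Q.1 := by
      intro Q m x hx
      obtain ⟨q, hqQ, hq⟩ := hVsub Q hx
      replace hq : omegaIt f ((τ Q : ℕ)) q = omegaIt f ((τ Q : ℕ)) (g^[m] x) := hq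
      have hle : ((τ Q : ℕ)) + ((k + 1) - (τ Q : ℕ)) = k + 1 :=
        Nat.add_sub_cancel' (le_of_lt (τ Q).2)
      have e1 : g^[m + 1] x
          = segIt f ((τ Q : ℕ)) ((k + 1) - (τ Q : ℕ)) (omegaIt f ((τ Q : ℕ)) (g^[m] x)) := by
        rw [segIt_omegaIt, hle, Function.iterate_succ_apply']
      rw [e1, ← hq, segIt_omegaIt, hle]
      exact Q.2.2.2.1 ⟨q, hqQ, rfl⟩
    -- compactness: uniform absorption time T
    obtain ⟨s, hs_cover⟩ := isCompact_univ.elim_finite_subcover u hu_open hu_cover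
    set T : ℕ := (s.sup fun p => p.2) + 1 with hT
    have habs : ∀ x : X, ∃ p ∈ s, g^[T] x ∈ p.1.1 := by
      intro x
      rcases mem_iUnion₂.1 (hs_cover (mem_univ x)) with ⟨p, hp, hx⟩
      refine ⟨p, hp, ?_⟩
      have hmem1 : g^[p.2 + 1] x ∈ p.1.1 := hwrap p.1 p.2 x hx
      have hle : p.2 + 1 ≤ T := Nat.succ_le_succ (Finset.le_sup hp)
      obtain ⟨d, hd⟩ := Nat.exists_eq_add_of_le hle
      rw [hd, add_comm, Function.iterate_add_apply]
      exact iterate_mem_of_inv p.1.2.2.2.1 hmem1 d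
    -- surjectivity: X is the union of finitely many minimal sets
    have hgTsurj : Function.Surjective (g^[T]) :=
      (omegaIt_surjective f hs (k + 1)).iterate T
    have huniv : (univ : Set X) = ⋃ p ∈ s, p.1.1 := by
      apply Subset.antisymm _ (subset_univ _)
      intro y _
      obtain ⟨x, hx⟩ := hgTsurj y
      obtain ⟨p, hp, hmem⟩ := habs x
      exact mem_iUnion₂.2 ⟨p, hp, hx ▸ hmem⟩
    -- connectedness: there is just one of them, equal to X
    have hsne : s.Nonempty := by
      obtain ⟨x⟩ : Nonempty X := inferInstance
      have : x ∈ ⋃ p ∈ s, p.1.1 := huniv ▸ mem_univ x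
      rcases mem_iUnion₂.1 this with ⟨p, hp, _⟩
      exact ⟨p, hp⟩
    obtain ⟨p₀, hp₀⟩ := hsne
    have hQ0 : IsMinSet g p₀.1.1 := p₀.1.2
    have hopen : IsOpen p₀.1.1 := by
      rw [← isClosed_compl_iff]
      have hcompl : p₀.1.1ᶜ = ⋃ p ∈ s.filter (fun p => p.1.1 ≠ p₀.1.1), p.1.1 := by
        ext z
        constructor
        · intro hz
          have hz2 : z ∈ ⋃ p ∈ s, p.1.1 := huniv ▸ mem_univ z
          rcases mem_iUnion₂.1 hz2 with ⟨p, hp, hzp⟩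
          refine mem_iUnion₂.2 ⟨p, Finset.mem_filter.2 ⟨hp, fun heq => hz (heq ▸ hzp)⟩, hzp⟩
        · intro hz hzQ0
          rcases mem_iUnion₂.1 hz with ⟨p, hp, hzp⟩
          obtain ⟨_, hpne⟩ := Finset.mem_filter.1 hp
          exact hpne (minset_eq_of_inter p.1.2 hQ0 ⟨z, hzp, hzQ0⟩)
      rw [hcompl]
      exact isClosed_biUnion_finset fun p _ => p.1.2.2.1
    have huniv' : p₀.1.1 = univ := IsClopen.eq_univ ⟨hQ0.2.1, hopen⟩ hQ0.1
    have hminuniv : IsMinSet g (univ : Set X) := huniv' ▸ hQ0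
    intro x
    have hAx : A x = univ :=
      hminuniv.2.2.2 (A x) (subset_univ _) (hAne x) (hAcl x) (hAinv x)
    rw [dense_iff_closure_eq]
    exact hAx
  · -- easy direction
    intro h2 x
    refine (h2 x).mono ?_
    rintro _ ⟨m, rfl⟩
    exact ⟨(k + 1) * m, omegaIt_mul f m x⟩
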